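/- A fine simplicial fan in ℝⁿ whose rays are generated by exactly the boundary lattice points of an n-dimensional lattice polytope Δ° (with 0 in its interior) and whose support is the cone over Δ° cannot have a maximal (n-dimensional) cone σ that is a 'basepoint cone', i.e., such that the generators of σ are not contained in a common facet of Δ° while the generators of every proper face of σ are contained in some facet of Δ°. -/

import Mathlib

/-- Cast an integer vector to a real vector. -/
def toR {n : ℕ} (w : Fin n → ℤ) : Fin n → ℝ := fun i => (w i : ℝ)

/-- A set `s` of points is contained in a common facet of the polytope `P` (which has
the origin in its interior) when some supporting functional at level `-1` is tight on
all of `s`. -/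
def OnCommonFacet {n : ℕ} (P : Set (Fin n → ℝ)) (s : Set (Fin n → ℝ)) : Prop :=
  ∃ m : Fin n → ℝ, (∀ x ∈ P, (-1 : ℝ) ≤ ∑ k, m k * x k) ∧ ∀ u ∈ s, ∑ k, m k * u k = -1

/-- A fine simplicial fan `F` in `ℝⁿ` — a collection of cones with
pairwise disjoint relative interiors, whose rays are generated by exactly the boundary
lattice points of an `n`-dimensional lattice polytope `Δ° = P` (with `0` in its
interior), and whose support is the cone over `Δ°` — cannot have a maximal
(`n`-dimensional) cone `σ` that is a *basepoint cone*: one whose generators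
`u₁, …, uₙ` are not contained in a common facet of `Δ°` while the generators of every
proper face of `σ` are contained in some facet of `Δ°`. -/
theorem stmt_11 {n : ℕ} (V : Finset (Fin n → ℤ)) (P : Set (Fin n → ℝ))
    (hP : P = convexHull ℝ (toR '' ↑V))
    (h0 : (0 : Fin n → ℝ) ∈ interior P)
    (F : Set (Set (Fin n → ℝ)))
    (hfan : ∀ σ ∈ F, ∀ τ ∈ F, σ ≠ τ →
      intrinsicInterior ℝ σ ∩ intrinsicInterior ℝ τ = ∅)
    (hfine : ∀ w : Fin n → ℤ, toR w ∈ frontier P →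
      {x | ∃ c : ℝ, 0 ≤ c ∧ x = c • toR w} ∈ F)
    (hsupp : ⋃₀ F = {x | ∃ c : ℝ, 0 ≤ c ∧ ∃ y ∈ P, x = c • y})
    (u : Fin n → (Fin n → ℤ))
    (hindep : LinearIndependent ℝ (fun i => toR (u i)))
    (hubd : ∀ i, toR (u i) ∈ frontier P)
    (hσ : {x | ∃ a : Fin n → ℝ, (∀ i, 0 ≤ a i) ∧ x = ∑ i, a i • toR (u i)} ∈ F)
    (hbp1 : ¬ OnCommonFacet P (Set.range fun i => toR (u i)))
    (hbp2 : ∀ j : Fin n, OnCommonFacet P {x | ∃ i, i ≠ j ∧ x = toR (u i)}) :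
    False := by
  classical
  -- `Fin n` is nonempty, else `m = 0` witnesses `hbp1`.
  haveI hne : Nonempty (Fin n) := by
    by_contra h
    haveI : IsEmpty (Fin n) := not_nonempty_iff.mp h
    refine hbp1 ⟨0, fun x _ => by simp, fun x hx => by simp at hx⟩
  -- Basic facts about `P`.
  have hPconv : Convex ℝ P := hP ▸ convex_convexHull ℝ _
  have hPcompact : IsCompact P := by
    rw [hP]
    exact (((V : Set (Fin n → ℤ)).toFinite).image toR).isCompact_convexHull ℝ
  have hPclosed : IsClosed P := hPcompact.isClosed
  have hfrsub : frontier P ⊆ P := hPclosed.frontier_subset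
  have huP : ∀ i, toR (u i) ∈ P := fun i => hfrsub (hubd i)
  -- The basis given by the generators of `σ`.
  have hcard : Fintype.card (Fin n) = Module.finrank ℝ (Fin n → ℝ) := by
    simp [Module.finrank_fin_fun]
  let B : Module.Basis (Fin n) ℝ (Fin n → ℝ) := basisOfLinearIndependentOfCardEqFinrank hindep hcard
  have hB : ∀ i, B i = toR (u i) := fun i => by
    rw [coe_basisOfLinearIndependentOfCardEqFinrank]
  -- The functional that is `-1` on every generator.
  let f : (Fin n → ℝ) →ₗ[ℝ] ℝ := -∑ i, B.coord i
  have hf_u : ∀ i, f (toR (u i)) = -1 := by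
    intro i
    rw [← hB i]
    simp [f, LinearMap.sum_apply, Module.Basis.coord_apply, Module.Basis.repr_self,
      Finsupp.single_apply, Finset.sum_ite_eq]
  -- Any linear functional is of pairing form.
  have hpair : ∀ (g : (Fin n → ℝ) →ₗ[ℝ] ℝ) (x : Fin n → ℝ),
      ∑ k, g (Pi.single k 1) * x k = g x := by
    intro g x
    have hx : x = ∑ k, x k • (Pi.single k 1 : Fin n → ℝ) := by
      funext j
      simp [Finset.sum_apply, Pi.single_apply, Finset.sum_ite_eq]
    conv_rhs => rw [hx]
    rw [map_sum]
    simp [map_smul, mul_comm]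
  -- From `hbp1`, there is `y ∈ P` with `f y < -1`.
  have hy : ∃ y ∈ P, f y < -1 := by
    by_contra h
    push_neg at h
    refine hbp1 ⟨fun k => f (Pi.single k 1), fun x hx => by rw [hpair]; exact h x hx,
      fun x hx => ?_⟩
    obtain ⟨i, rfl⟩ := hx
    rw [hpair]
    exact hf_u i
  obtain ⟨y, hyP, hyf⟩ := hy
  -- Minimize `f` over the (finite) vertex set.
  have hSne : (toR '' (V : Set (Fin n → ℤ))).Nonempty := by
    have hne' : (convexHull ℝ (toR '' (V : Set (Fin n → ℤ)))).Nonempty := ⟨y, hP ▸ hyP⟩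
    exact convexHull_nonempty_iff.mp hne'
  set T : Finset (Fin n → ℝ) := V.image toR with hT
  have hTcoe : (T : Set (Fin n → ℝ)) = toR '' (V : Set (Fin n → ℤ)) := by
    simp [hT, Finset.coe_image]
  have hTne : T.Nonempty := by
    rw [← Finset.coe_nonempty, hTcoe]; exact hSne
  obtain ⟨v0, hv0T, hv0min⟩ := T.exists_min_image (fun x => f x) hTne
  have hv0S : v0 ∈ toR '' (V : Set (Fin n → ℤ)) := hTcoe ▸ hv0T
  have hv0P : v0 ∈ P := by
    rw [hP]; exact subset_convexHull ℝ _ hv0S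
  -- `v0` minimizes `f` over all of `P`.
  have hminP : ∀ x ∈ P, f v0 ≤ f x := by
    intro x hx
    have hx' : x ∈ convexHull ℝ (toR '' (V : Set (Fin n → ℤ))) := hP ▸ hx
    have hsub : convexHull ℝ (toR '' (V : Set (Fin n → ℤ))) ⊆ {z | f v0 ≤ f z} := by
      refine convexHull_min ?_ (convex_halfSpace_ge f.isLinear _)
      intro s hs
      exact hv0min s (by rwa [← hTcoe] at hs)
    exact hsub hx'
  have hfv0 : f v0 < -1 := lt_of_le_of_lt (hminP y hyP) hyf
  have hv0ne : v0 ≠ 0 := by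
    intro h
    rw [h, map_zero] at hfv0
    linarith
  -- `v0` is a frontier point of `P`.
  have hv0fr : v0 ∈ frontier P := by
    rw [hPclosed.frontier_eq]
    refine ⟨hv0P, fun hint => ?_⟩
    obtain ⟨ε, hε, hball⟩ := Metric.mem_nhds_iff.mp (mem_interior_iff_mem_nhds.mp hint)
    have hnorm : (0 : ℝ) < ‖v0‖ := norm_pos_iff.mpr hv0ne
    set δ : ℝ := ε / (2 * ‖v0‖) with hδdef
    have hδ : 0 < δ := div_pos hε (by positivity)
    have hzmem : (1 + δ) • v0 ∈ Metric.ball v0 ε := by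
      rw [Metric.mem_ball, dist_eq_norm]
      have h1 : (1 + δ) • v0 - v0 = δ • v0 := by
        rw [add_smul, one_smul, add_sub_cancel_left]
      rw [h1, norm_smul, Real.norm_eq_abs, abs_of_pos hδ, hδdef]
      rw [div_mul_eq_mul_div, mul_comm]
      rw [mul_comm (2 : ℝ) ‖v0‖, ← div_div]
      have : ‖v0‖ * ε / ‖v0‖ = ε := by field_simp
      rw [this]
      linarith
    have hle := hminP _ (hball hzmem)
    rw [map_smul, smul_eq_mul] at hle
    nlinarith
  obtain ⟨w0, hw0V, hw0⟩ : ∃ w ∈ (V : Set (Fin n → ℤ)), toR w = v0 := hv0S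
  -- Coordinates of `v0` in the basis.
  set b : Fin n → ℝ := fun i => B.repr v0 i with hbdef
  have hv0sum : ∑ i, b i • toR (u i) = v0 := by
    have h := B.sum_repr v0
    simp only [hB] at h
    exact h
  have hfv0' : f v0 = -∑ i, b i := by
    conv_lhs => rw [← hv0sum]
    rw [map_sum]
    simp [map_smul, hf_u, smul_eq_mul]
  have hsumb : 1 < ∑ i, b i := by
    rw [hfv0'] at hfv0
    linarith
  -- Each coordinate of `v0` is positive, thanks to `hbp2`.
  have hbpos : ∀ j, 0 < b j := by
    intro j
    obtain ⟨m, hmA, hmB⟩ := hbp2 j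
    set g : (Fin n → ℝ) →ₗ[ℝ] ℝ := ∑ k, m k • LinearMap.proj k with hgdef
    have hg : ∀ x, g x = ∑ k, m k * x k := by
      intro x
      simp [hgdef, LinearMap.sum_apply, LinearMap.proj_apply, smul_eq_mul]
    have hgu : ∀ i, i ≠ j → g (toR (u i)) = -1 := by
      intro i hij
      rw [hg]
      exact hmB _ ⟨i, hij, rfl⟩
    have hc_ge : -1 ≤ g (toR (u j)) := by
      rw [hg]; exact hmA _ (huP j)
    have hc_ne : g (toR (u j)) ≠ -1 := by
      intro hc
      refine hbp1 ⟨m, hmA, fun x hx => ?_⟩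
      obtain ⟨i, rfl⟩ := hx
      by_cases hij : i = j
      · subst hij; rw [← hg]; exact hc
      · rw [← hg]; exact hgu i hij
    have hcpos : -1 < g (toR (u j)) := lt_of_le_of_ne hc_ge (Ne.symm hc_ne)
    have hgv0 : -1 ≤ g v0 := by rw [hg]; exact hmA _ hv0P
    have hgv0' : g v0 = ∑ i, b i * g (toR (u i)) := by
      conv_lhs => rw [← hv0sum]
      rw [map_sum]
      simp [map_smul, smul_eq_mul]
    have hsplit : ∑ i, b i * g (toR (u i))
        = b j * g (toR (u j)) + ∑ i ∈ Finset.univ.erase j, b i * g (toR (u i)) :=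
      (Finset.add_sum_erase _ _ (Finset.mem_univ j)).symm
    have herase : ∑ i ∈ Finset.univ.erase j, b i * g (toR (u i))
        = -(∑ i, b i - b j) := by
      have h1 : ∑ i ∈ Finset.univ.erase j, b i * g (toR (u i))
          = ∑ i ∈ Finset.univ.erase j, (-(b i)) := by
        refine Finset.sum_congr rfl fun i hi => ?_
        rw [hgu i (Finset.ne_of_mem_erase hi)]
        ring
      rw [h1, Finset.sum_neg_distrib,
        Finset.sum_erase_eq_sub (Finset.mem_univ j)]
    rw [hgv0', hsplit, herase] at hgv0
    nlinarith
  -- `v0` lies in the interior of `σ`.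
  set σ : Set (Fin n → ℝ) :=
    {x | ∃ a : Fin n → ℝ, (∀ i, 0 ≤ a i) ∧ x = ∑ i, a i • toR (u i)} with hσdef
  set U : Set (Fin n → ℝ) :=
    {x | ∃ a : Fin n → ℝ, (∀ i, 0 < a i) ∧ x = ∑ i, a i • toR (u i)} with hUdef
  have hUsubσ : U ⊆ σ := by
    rintro x ⟨a, ha, rfl⟩
    exact ⟨a, fun i => le_of_lt (ha i), rfl⟩
  have hUeq : U = ⇑(B.equivFun.symm) '' {a : Fin n → ℝ | ∀ i, 0 < a i} := by
    ext x
    constructor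
    · rintro ⟨a, ha, rfl⟩
      refine ⟨a, ha, ?_⟩
      rw [Module.Basis.equivFun_symm_apply]
      exact Finset.sum_congr rfl fun i _ => by rw [hB i]
    · rintro ⟨a, ha, rfl⟩
      refine ⟨a, ha, ?_⟩
      rw [Module.Basis.equivFun_symm_apply]
      exact (Finset.sum_congr rfl fun i _ => by rw [hB i]).symm
  have hposopen : IsOpen {a : Fin n → ℝ | ∀ i, 0 < a i} := by
    have : {a : Fin n → ℝ | ∀ i, 0 < a i}
        = Set.pi Set.univ (fun _ : Fin n => Set.Ioi (0 : ℝ)) := by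
      ext a; simp [Set.mem_pi]
    rw [this]
    exact isOpen_set_pi Set.finite_univ fun i _ => isOpen_Ioi
  have hUopen : IsOpen U := by
    rw [hUeq]
    exact (B.equivFun.symm.toContinuousLinearEquiv.toHomeomorph.isOpenMap) _ hposopen
  have hv0U : v0 ∈ U := ⟨b, hbpos, hv0sum.symm⟩
  have hv0intσ : v0 ∈ intrinsicInterior ℝ σ :=
    interior_subset_intrinsicInterior (interior_maximal hUsubσ hUopen hv0U)
  -- The ray through `v0`, which belongs to `F` since `v0` is a boundary lattice point.
  set R : Set (Fin n → ℝ) := {x | ∃ c : ℝ, 0 ≤ c ∧ x = c • v0} with hRdef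
  have hRF : R ∈ F := by
    have := hfine w0 (by rw [hw0]; exact hv0fr)
    rw [hw0] at this
    exact this
  -- `v0` lies in the intrinsic interior of the ray `R`.
  have hnorm : (0 : ℝ) < ‖v0‖ := norm_pos_iff.mpr hv0ne
  set e : Fin n → ℝ := ‖v0‖⁻¹ • v0 with hedef
  have he : ‖e‖ = 1 := norm_smul_inv_norm (𝕜 := ℝ) hv0ne
  set φL : ℝ →ₗᵢ[ℝ] (Fin n → ℝ) :=
    ⟨LinearMap.toSpanSingleton ℝ _ e, fun t => by
      simp [LinearMap.toSpanSingleton_apply, norm_smul, he]⟩ with hφLdef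
  set φ : ℝ →ᵃⁱ[ℝ] (Fin n → ℝ) := φL.toAffineIsometry with hφdef
  have hφ_apply : ∀ t : ℝ, φ t = t • e := fun t => by
    simp [hφdef, hφLdef, LinearIsometry.coe_toAffineIsometry,
      LinearMap.toSpanSingleton_apply]
  have hReq : R = φ '' Set.Ici (0 : ℝ) := by
    ext x
    constructor
    · rintro ⟨c, hc, rfl⟩
      refine ⟨c * ‖v0‖, mul_nonneg hc (norm_nonneg _), ?_⟩
      rw [hφ_apply, hedef, smul_smul, mul_assoc, mul_inv_cancel₀ (ne_of_gt hnorm), mul_one]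
    · rintro ⟨t, ht, rfl⟩
      refine ⟨t * ‖v0‖⁻¹, mul_nonneg ht (inv_nonneg.mpr (norm_nonneg _)), ?_⟩
      rw [hφ_apply, hedef, smul_smul]
  have hv0intR : v0 ∈ intrinsicInterior ℝ R := by
    rw [hReq, AffineIsometry.image_intrinsicInterior]
    refine ⟨‖v0‖, interior_subset_intrinsicInterior ?_, ?_⟩
    · rw [interior_Ici]
      exact hnorm
    · rw [hφ_apply, hedef, smul_smul, mul_inv_cancel₀ (ne_of_gt hnorm), one_smul]
  -- Conclude.
  by_cases hRσ : σ = R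
  · -- Then each generator is a proper-positive multiple of `v0`, hence interior to `P`.
    obtain ⟨i0⟩ := hne
    have hui0σ : toR (u i0) ∈ σ := by
      refine ⟨Pi.single i0 1, fun i => ?_, ?_⟩
      · rcases eq_or_ne i i0 with rfl | hii
        · simp
        · simp [Pi.single_apply, hii]
      · rw [Finset.sum_eq_single i0 (fun i _ hii => by simp [Pi.single_apply, hii])
          (fun h => absurd (Finset.mem_univ i0) h)]
        simp
    rw [hRσ] at hui0σ
    obtain ⟨c, hc, hcu⟩ := hui0σ
    have hcf : c * f v0 = -1 := by
      have := hf_u i0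
      rw [hcu, map_smul, smul_eq_mul] at this
      linarith
    have hc1 : c < 1 := by nlinarith
    have hc0 : 0 < c := by
      rcases lt_or_eq_of_le hc with h | h
      · exact h
      · exfalso; rw [← h] at hcf; simp at hcf
    have hseg : toR (u i0) ∈ openSegment ℝ (0 : Fin n → ℝ) v0 := by
      refine ⟨1 - c, c, by linarith, hc0, by ring, ?_⟩
      rw [smul_zero, zero_add, hcu]
    have hint : toR (u i0) ∈ interior P :=
      hPconv.openSegment_interior_closure_subset_interior h0
        (subset_closure hv0P) hseg
    have hfr := hubd i0
    rw [hPclosed.frontier_eq] at hfr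
    exact hfr.2 hint
  · -- Distinct cones of the fan have disjoint intrinsic interiors.
    have hdisj := hfan σ hσ R hRF hRσ
    rw [Set.eq_empty_iff_forall_notMem] at hdisj
    exact hdisj v0 ⟨hv0intσ, hv0intR⟩
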